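/- Let V be a local operator system with cones {C_α^n} and Archimedean matrix order unit e, equipped with the seminorms ‖X‖_α^n = inf { r ≥ 0 : [[r·e_n, X],[X*, r·e_n]] ∈ C_α^{2n} }. Then for each α and n, the cone C_α^n is a closed subset of M_n(V) in the locally convex topology generated by the family of seminorms {‖·‖_β^n : β ∈ Γ}. -/
import Mathlib


open scoped ComplexOrder

noncomputable section

variable {V : Type} [AddCommGroup V] [Module ℂ V]

/-- Conjugation `Xᴴ A X` of a `V`-valued matrix by a scalar matrix `X`. -/
def sconj {n m : ℕ} (X : Matrix (Fin n) (Fin m) ℂ)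
    (A : Matrix (Fin n) (Fin n) V) : Matrix (Fin m) (Fin m) V :=
  Matrix.of fun i j => ∑ p, ∑ q, ((starRingEnd ℂ) (X p i) * X q j) • A p q

/-- A (not necessarily proper) cone in a complex vector space. -/
def IsVCone {M : Type} [AddCommGroup M] [Module ℂ M] (C : Set M) : Prop :=
  (0 : M) ∈ C ∧ (∀ x ∈ C, ∀ y ∈ C, x + y ∈ C) ∧
    ∀ r : ℝ, 0 ≤ r → ∀ x ∈ C, (r : ℂ) • x ∈ C

/-- A 2×2 block matrix of `n × n` blocks, reindexed to `Fin (n+n)`. -/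
def blk {n : ℕ} (A B C D : Matrix (Fin n) (Fin n) V) :
    Matrix (Fin (n + n)) (Fin (n + n)) V :=
  Matrix.reindex finSumFinEquiv finSumFinEquiv (Matrix.fromBlocks A B C D)

/-- The diagonal matrix `diag (e, …, e)`. -/
def diagE (e : V) (n : ℕ) : Matrix (Fin n) (Fin n) V :=
  Matrix.diagonal fun _ => e

variable [StarAddMonoid V] [StarModule ℂ V]

/-- The seminorm at level `(α, n)` induced by the matrix cones `C` and the unit `e`:
`‖X‖_α^n = inf { r ≥ 0 : [[r eₙ, X],[X*, r eₙ]] ∈ C_α^{2n} }`. -/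
def nrm {Γ : Type} (C : Γ → (k : ℕ) → Set (Matrix (Fin k) (Fin k) V)) (e : V)
    (α : Γ) (n : ℕ) (X : Matrix (Fin n) (Fin n) V) : ℝ :=
  sInf {r : ℝ | 0 ≤ r ∧
    blk ((r : ℂ) • diagE e n) X (star X) ((r : ℂ) • diagE e n) ∈ C α (n + n)}

/-- A local matrix *-ordering on `V`: a downward filtered family of compatible matrix
cones of hermitian matrices whose total intersection with their negatives is trivial. -/
structure LMOrder (Γ : Type) (V : Type) [AddCommGroup V] [Module ℂ V]
    [StarAddMonoid V] [StarModule ℂ V] where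
  C : Γ → (n : ℕ) → Set (Matrix (Fin n) (Fin n) V)
  cone : ∀ α n, IsVCone (C α n)
  herm : ∀ α n, ∀ A ∈ C α n, star A = A
  filtered : ∀ α β : Γ, ∃ γ, ∀ n, C γ n ⊆ C α n ∩ C β n
  proper : ∀ n (A : Matrix (Fin n) (Fin n) V), (∀ α, A ∈ C α n ∧ -A ∈ C α n) → A = 0
  compat : ∀ (α : Γ) (n m : ℕ) (X : Matrix (Fin n) (Fin m) ℂ),
    ∀ A ∈ C α n, sconj X A ∈ C α m

/-- An abstract local operator system: a local matrix *-ordering together with an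
Archimedean matrix order unit. -/
structure LocalOpSys (Γ : Type) (V : Type) [AddCommGroup V] [Module ℂ V]
    [StarAddMonoid V] [StarModule ℂ V] extends LMOrder Γ V where
  e : V
  eherm : star e = e
  unit : ∀ (α : Γ) (n : ℕ) (A : Matrix (Fin n) (Fin n) V), star A = A →
    ∃ r : ℝ, 0 < r ∧ (r : ℂ) • diagE e n - A ∈ C α n
  arch : ∀ (α : Γ) (n : ℕ) (A : Matrix (Fin n) (Fin n) V),
    (∀ r : ℝ, 0 < r → (r : ℂ) • diagE e n + A ∈ C α n) → A ∈ C α n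

/-- An Archimedean local order unit space (`A.L.O.U.` space): ground-level cones only. -/
structure ALOU (Γ : Type) (V : Type) [AddCommGroup V] [Module ℂ V]
    [StarAddMonoid V] [StarModule ℂ V] where
  pos : Γ → Set V
  cone : ∀ α, IsVCone (pos α)
  herm : ∀ α, ∀ v ∈ pos α, star v = v
  filtered : ∀ α β : Γ, ∃ γ, pos γ ⊆ pos α ∩ pos β
  proper : ∀ v : V, (∀ α, v ∈ pos α ∧ -v ∈ pos α) → v = 0
  e : V
  eherm : star e = e
  unit : ∀ (α : Γ) (v : V), star v = v → ∃ r : ℝ, 0 < r ∧ (r : ℂ) • e - v ∈ pos α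
  arch : ∀ (α : Γ) (v : V), (∀ r : ℝ, 0 < r → (r : ℂ) • e + v ∈ pos α) → v ∈ pos α

/-- The minimal matrix cones over a family of ground-level cones. -/
def Cmin {Γ : Type} (pos : Γ → Set V) (α : Γ) (n : ℕ) :
    Set (Matrix (Fin n) (Fin n) V) :=
  {A | ∀ L : Fin n → ℂ, (∑ i, ∑ j, ((starRingEnd ℂ) (L i) * L j) • A i j) ∈ pos α}

/-- The maximal matrix cones over a family of ground-level cones:
sums `Σ aᵢ ⊗ vᵢ` with `aᵢ` positive semidefinite scalar matrices and `vᵢ` positive. -/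
def Dmax {Γ : Type} (pos : Γ → Set V) (α : Γ) (n : ℕ) :
    Set (Matrix (Fin n) (Fin n) V) :=
  {A | ∃ (k : ℕ) (a : Fin k → Matrix (Fin n) (Fin n) ℂ) (v : Fin k → V),
    (∀ i, (a i).PosSemidef) ∧ (∀ i, v i ∈ pos α) ∧
    A = Matrix.of fun p q => ∑ i, (a i p q) • v i}

/-- The amplification `φ⁽ᵏ⁾` of a matrix-valued linear map, realized on the index
type `Fin k × ι`. -/
def ampP {S : Type} [AddCommGroup S] [Module ℂ S] {k : ℕ} {ι : Type} [Fintype ι]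
    (φ : S →ₗ[ℂ] Matrix ι ι ℂ) (M : Matrix (Fin k) (Fin k) S) :
    Matrix (Fin k × ι) (Fin k × ι) ℂ :=
  Matrix.of fun ip jq => φ (M ip.1 jq.1) ip.2 jq.2

end

noncomputable section Helpers
set_option linter.unusedSectionVars false

variable {V : Type} [AddCommGroup V] [Module ℂ V]

lemma blk_add' {n : ℕ} (A B C D A' B' C' D' : Matrix (Fin n) (Fin n) V) :
    blk A B C D + blk A' B' C' D' = blk (A+A') (B+B') (C+C') (D+D') := by
  ext i j
  simp [blk, Matrix.add_apply]
  rcases finSumFinEquiv.symm i with p | p <;> rcases finSumFinEquiv.symm j with q | q <;> simp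

lemma blk_smul' {n : ℕ} (c : ℂ) (A B C D : Matrix (Fin n) (Fin n) V) :
    c • blk A B C D = blk (c•A) (c•B) (c•C) (c•D) := by
  ext i j
  simp [blk, Matrix.smul_apply]
  rcases finSumFinEquiv.symm i with p | p <;> rcases finSumFinEquiv.symm j with q | q <;> simp

lemma diagE_split (e : V) (n : ℕ) :
    diagE e (n + n) = blk (diagE e n) 0 0 (diagE e n) := by
  ext i j
  simp only [diagE, blk, Matrix.fromBlocks_diagonal, Matrix.reindex_apply,
    Matrix.submatrix_apply]
  by_cases h : i = j
  · subst h
    simp only [Matrix.diagonal_apply_eq]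
    rcases finSumFinEquiv.symm i with p | p <;> rfl
  · rw [Matrix.diagonal_apply_ne _ h, Matrix.diagonal_apply_ne]
    exact fun h' => h (finSumFinEquiv.symm.injective h')

/-- The `2n × n` scalar matrix `[[1],[c·1]]`. -/
def Xcol {n : ℕ} (c : ℂ) : Matrix (Fin (n+n)) (Fin n) ℂ :=
  Matrix.of fun i j =>
    Sum.elim (fun p => if p = j then 1 else 0) (fun p => if p = j then c else 0)
      (finSumFinEquiv.symm i)

lemma sconj_Xcol {n : ℕ} (c : ℂ) (P Q R S : Matrix (Fin n) (Fin n) V) :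
    sconj (Xcol c) (blk P Q R S) =
      P + c • Q + (starRingEnd ℂ c) • R + ((starRingEnd ℂ c) * c) • S := by
  ext i j
  simp only [sconj, Matrix.of_apply]
  have h1 : ∀ (f : Fin (n+n) → V), ∑ p, f p = ∑ a : Fin n ⊕ Fin n, f (finSumFinEquiv a) :=
    fun f => (Equiv.sum_comp _ f).symm
  simp only [h1]
  simp only [Xcol, blk, Matrix.of_apply, Matrix.reindex_apply, Matrix.submatrix_apply,
    Equiv.symm_apply_apply]
  simp only [Fintype.sum_sum_type]
  simp [Finset.sum_add_distrib, Finset.sum_ite_eq', apply_ite (starRingEnd ℂ), ite_mul,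
    mul_ite, ite_smul, Matrix.add_apply, Matrix.smul_apply, add_assoc]

variable [StarAddMonoid V] [StarModule ℂ V]

lemma star_blk {n : ℕ} (A B C D : Matrix (Fin n) (Fin n) V) :
    star (blk A B C D) = blk (star A) (star C) (star B) (star D) := by
  simp only [blk, Matrix.star_eq_conjTranspose, Matrix.reindex_apply,
    Matrix.conjTranspose_submatrix, Matrix.fromBlocks_conjTranspose]

variable {Γ : Type} (S : LocalOpSys Γ V)

lemma E_mem (α : Γ) (n : ℕ) : diagE S.e n ∈ S.C α n := by
  obtain ⟨r, hr, h⟩ := S.unit α n 0 (star_zero _)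
  rw [sub_zero] at h
  have h2 := (S.cone α n).2.2 r⁻¹ (by positivity) _ h
  rw [smul_smul] at h2
  have : ((r⁻¹ : ℝ) : ℂ) * (r : ℂ) = 1 := by
    push_cast
    exact inv_mul_cancel₀ (by exact_mod_cast hr.ne')
  rwa [this, one_smul] at h2

lemma smul_E_mem (α : Γ) (n : ℕ) {r : ℝ} (hr : 0 ≤ r) :
    (r : ℂ) • diagE S.e n ∈ S.C α n :=
  (S.cone α n).2.2 r hr _ (E_mem S α n)

lemma mem_nrm_set (α : Γ) (n : ℕ) (M : Matrix (Fin n) (Fin n) V) :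
    ∃ r : ℝ, 0 ≤ r ∧
      blk ((r:ℂ) • diagE S.e n) M (star M) ((r:ℂ) • diagE S.e n) ∈ S.C α (n + n) := by
  have hherm : star (-(blk 0 M (star M) 0)) = -(blk 0 M (star M) 0) := by
    simp [star_blk, star_star]
  obtain ⟨r, hr, h⟩ := S.unit α (n+n) (-(blk 0 M (star M) 0)) hherm
  refine ⟨r, hr.le, ?_⟩
  rw [sub_neg_eq_add, diagE_split, blk_smul', blk_add'] at h
  simpa using h

lemma nrm_extract (α : Γ) (n : ℕ) (M : Matrix (Fin n) (Fin n) V) {ε : ℝ}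
    (h : nrm S.C S.e α n M < ε) :
    ∃ s : ℝ, 0 ≤ s ∧ s < ε ∧
      blk ((s:ℂ) • diagE S.e n) M (star M) ((s:ℂ) • diagE S.e n) ∈ S.C α (n + n) := by
  have hne : Set.Nonempty {r : ℝ | 0 ≤ r ∧
      blk ((r:ℂ) • diagE S.e n) M (star M) ((r:ℂ) • diagE S.e n) ∈ S.C α (n + n)} := by
    obtain ⟨r, hr, hm⟩ := mem_nrm_set S α n M
    exact ⟨r, hr, hm⟩
  have hbdd : BddBelow {r : ℝ | 0 ≤ r ∧
      blk ((r:ℂ) • diagE S.e n) M (star M) ((r:ℂ) • diagE S.e n) ∈ S.C α (n + n)} :=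
    ⟨0, fun x hx => hx.1⟩
  have h' : sInf {r : ℝ | 0 ≤ r ∧
      blk ((r:ℂ) • diagE S.e n) M (star M) ((r:ℂ) • diagE S.e n) ∈ S.C α (n + n)} < ε := h
  obtain ⟨s, hs, hlt⟩ := (csInf_lt_iff hbdd hne).mp h'
  exact ⟨s, hs.1, hlt, hs.2⟩

lemma blk_pos_comb (α : Γ) (n : ℕ) {s : ℝ} {M : Matrix (Fin n) (Fin n) V}
    (h : blk ((s:ℂ) • diagE S.e n) M (star M) ((s:ℂ) • diagE S.e n) ∈ S.C α (n + n))
    (c : ℂ) :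
    (s:ℂ) • diagE S.e n + c • M + (starRingEnd ℂ c) • star M
      + ((starRingEnd ℂ c) * c) • ((s:ℂ) • diagE S.e n) ∈ S.C α n := by
  have := S.compat α (n+n) n (Xcol c) _ h
  rwa [sconj_Xcol] at this

end Helpers

/-- each cone `C_α^n` is closed in the locally convex topology generated
by the family of cone-induced seminorms (closure expressed via the canonical
neighbourhood basis of finite intersections of seminorm balls). -/
theorem statement1 {Γ V : Type} [AddCommGroup V] [Module ℂ V] [StarAddMonoid V]
    [StarModule ℂ V] (S : LocalOpSys Γ V) (α : Γ) (n : ℕ)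
    (A : Matrix (Fin n) (Fin n) V)
    (hA : ∀ ε : ℝ, 0 < ε → ∀ F : Finset Γ,
      ∃ B ∈ S.C α n, ∀ β ∈ F, nrm S.C S.e β n (A - B) < ε) :
    A ∈ S.C α n := by
  set E : Matrix (Fin n) (Fin n) V := diagE S.e n with hE
  have step : ∀ (γ : Γ) (c : ℂ), (starRingEnd ℂ) c * c = 1 → ∀ r : ℝ, 0 < r →
      ∃ B ∈ S.C α n,
        (r:ℂ) • E + (c • (A - B) + (starRingEnd ℂ) c • star (A - B)) ∈ S.C γ n := by
    intro γ c hc r hr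
    obtain ⟨B, hB, hnrm⟩ := hA (r/2) (by linarith) {γ}
    obtain ⟨s, hs0, hsr, hblk⟩ := nrm_extract S γ n (A - B) (hnrm γ (Finset.mem_singleton_self γ))
    refine ⟨B, hB, ?_⟩
    have h1 := blk_pos_comb S γ n hblk c
    rw [hc, one_smul] at h1
    have h2 := (S.cone γ n).2.1 _ h1 _ (smul_E_mem S γ n (r := r - 2*s) (by linarith))
    have heq : ((s:ℂ) • diagE S.e n + c • (A - B) + (starRingEnd ℂ) c • star (A - B)
          + (s:ℂ) • diagE S.e n) + (((r - 2*s : ℝ)):ℂ) • diagE S.e n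
        = (r:ℂ) • E + (c • (A - B) + (starRingEnd ℂ) c • star (A - B)) := by
      rw [hE]
      push_cast
      module
    rwa [heq] at h2
  have hAh : star A = A := by
    have keyK : ∀ γ : Γ, Complex.I • (A - star A) ∈ S.C γ n := by
      intro γ
      apply S.arch γ n
      intro r hr
      obtain ⟨B, hB, h⟩ := step γ Complex.I (by simp [Complex.conj_I]) r hr
      have hBh := S.herm α n B hB
      have heq : Complex.I • (A - B) + (starRingEnd ℂ) Complex.I • star (A - B)
          = Complex.I • (A - star A) := by
        rw [star_sub, hBh, Complex.conj_I]
        module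
      rwa [heq] at h
    have keyK' : ∀ γ : Γ, -(Complex.I • (A - star A)) ∈ S.C γ n := by
      intro γ
      apply S.arch γ n
      intro r hr
      obtain ⟨B, hB, h⟩ := step γ (-Complex.I) (by simp [Complex.conj_I]) r hr
      have hBh := S.herm α n B hB
      have heq : (-Complex.I) • (A - B) + (starRingEnd ℂ) (-Complex.I) • star (A - B)
          = -(Complex.I • (A - star A)) := by
        rw [star_sub, hBh, map_neg, Complex.conj_I, neg_neg]
        module
      rwa [heq] at h
    have hK0 := S.proper n _ (fun γ => ⟨keyK γ, keyK' γ⟩)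
    rcases smul_eq_zero.mp hK0 with h | h
    · exact absurd h Complex.I_ne_zero
    · exact (sub_eq_zero.mp h).symm
  apply S.arch α n
  intro r hr
  obtain ⟨B, hB, h⟩ := step α 1 (by simp) (2*r) (by linarith)
  have hBh := S.herm α n B hB
  have hMh : star (A - B) = A - B := by rw [star_sub, hAh, hBh]
  rw [hMh] at h
  have h2 := (S.cone α n).2.2 (1/2) (by norm_num) _ h
  have heq : (((1:ℝ)/2 : ℝ):ℂ) • (((2*r : ℝ):ℂ) • E
        + ((1:ℂ) • (A - B) + (starRingEnd ℂ) (1:ℂ) • (A - B)))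
      = (r:ℂ) • E + (A - B) := by
    push_cast
    simp only [map_one]
    module
  rw [heq] at h2
  have h3 := (S.cone α n).2.1 _ h2 _ hB
  have heq2 : (r:ℂ) • E + (A - B) + B = (r:ℂ) • E + A := by abel
  rwa [heq2] at h3
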